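/- Mutation preserves compatibility: if (L, B̃) is a compatible pair with Σ_{t∈K} λ_{it} b_{tj} = δ_{ij} d for all i ∈ K, j ∈ K_ex, then the mutated pair (μ_k(L), μ_k(B̃)) := ((E^T) L E, E B̃ F) is again compatible with the same integer d, i.e. Σ_{t∈K} μ_k(L)_{it} μ_k(B̃)_{tj} = δ_{ij} d for all i ∈ K, j ∈ K_ex. -/
import Mathlib


/-- mutation preserves compatibility.  If `Σ_t λ_{it} b_{tj} = δ_{ij} d`
for all `i ∈ K`, `j ∈ K_ex`, then the mutated pair `(μ_k(L), μ_k(B̃)) = ((Eᵀ)LE, EB̃F)`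
satisfies the same compatibility relation with the same `d`. -/
theorem mutation_preserves_compatibility {K : Type*} [Fintype K] [DecidableEq K]
    (ex : Finset K) (L B : K → K → ℤ) (d : ℤ) (hd : 0 < d) (k : K) (hk : k ∈ ex)
    (hLskew : ∀ i j, L i j = - L j i)
    (hBskew : ∀ i ∈ ex, ∀ j ∈ ex, B i j = - B j i)
    (hcompat : ∀ i : K, ∀ j ∈ ex, (∑ u : K, L i u * B u j) = if i = j then d else 0)
    (E F : K → K → ℤ)
    (hE : ∀ i j, E i j = if j ≠ k then (if i = j then 1 else 0)
        else if i = k then -1 else max 0 (- B i k))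
    (hF : ∀ i j, F i j = if i ≠ k then (if i = j then 1 else 0)
        else if j = k then -1 else max 0 (B k j)) :
    ∀ i : K, ∀ j ∈ ex,
      (∑ u : K, (∑ p : K, ∑ r : K, E p i * L p r * E r u)
          * (∑ p : K, ∑ w ∈ ex, E u p * B p w * F w j))
        = if i = j then d else 0 := by
  classical
  intro i j hj
  have hEk : ∀ q : K, E k q = if q = k then -1 else 0 := by
    intro q
    rw [hE]
    by_cases h : q = k <;> simp [h, Ne.symm]
  have hEne : ∀ r u : K, u ≠ k → E r u = if r = u then 1 else 0 := by
    intro r u hu; rw [hE]; simp [hu]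
  have hFne : ∀ w j' : K, w ≠ k → F w j' = if w = j' then 1 else 0 := by
    intro w j' hw; rw [hF]; simp [hw]
  -- E * E = 1 entrywise
  have hEE : ∀ r q : K, (∑ u : K, E r u * E u q) = if r = q then 1 else 0 := by
    intro r q
    rw [← Finset.add_sum_erase Finset.univ (fun u => E r u * E u q) (Finset.mem_univ k)]
    have h1 : ∑ u ∈ Finset.univ.erase k, E r u * E u q
        = if r = k then 0 else E r q := by
      rw [Finset.sum_congr rfl (fun u hu => by
        rw [hEne r u (Finset.ne_of_mem_erase hu), ite_mul, one_mul, zero_mul])]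
      rw [Finset.sum_ite_eq]
      by_cases hr : r = k <;> simp [hr, Finset.mem_erase]
    rw [h1, hEk]
    by_cases hr : r = k
    · rw [hr, hEk k]
      by_cases hq : q = k
      · simp [hq]
      · simp [hq, Ne.symm hq]
    · rw [if_neg hr]
      by_cases hq : q = k
      · rw [hq, if_pos rfl, hE r k]
        simp [hr]
      · rw [if_neg hq, hEne r q hq]
        simp [hq]
  -- ∑_{w ∈ ex} E w i' * F w j = δ_{i'j}
  have hEF : ∀ i' : K, (∑ w ∈ ex, E w i' * F w j) = if i' = j then 1 else 0 := by
    intro i'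
    rw [← Finset.add_sum_erase ex (fun w => E w i' * F w j) hk]
    have h1 : ∑ w ∈ ex.erase k, E w i' * F w j
        = if j = k then 0 else E j i' := by
      rw [Finset.sum_congr rfl (fun w hw => by
        rw [hFne w j (Finset.ne_of_mem_erase hw), mul_ite, mul_one, mul_zero])]
      rw [Finset.sum_ite_eq']
      by_cases hjk : j = k <;> simp [hjk, Finset.mem_erase, hj]
    rw [h1, hEk i']
    by_cases hik : i' = k
    · rw [if_pos hik, hik, hF]
      by_cases hjk : j = k
      · simp [hjk]
      · have hBjk : B j k = - B k j := hBskew j hj k hk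
        rw [hE j k]
        simp [hjk, Ne.symm hjk, hBjk]
    · rw [if_neg hik]
      by_cases hjk : j = k
      · simp [hjk, hik]
      · rw [if_neg hjk, hEne j i' hik]
        simp [eq_comm]
  -- matrices
  set ME : Matrix K K ℤ := Matrix.of fun p q => E p q with hME
  set ML : Matrix K K ℤ := Matrix.of fun p q => L p q with hML
  set MB : Matrix K K ℤ := Matrix.of (fun p w => if w ∈ ex then B p w else 0) with hMB
  set MF : Matrix K K ℤ := Matrix.of (fun w j' => if w ∈ ex then F w j' else 0) with hMF
  have hE2 : ME * ME = 1 := by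
    ext r q
    rw [Matrix.mul_apply, Matrix.one_apply]
    simpa [hME] using hEE r q
  -- rewrite the two inner sums as matrix entries
  have hT1 : ∀ u : K, (∑ p : K, ∑ r : K, E p i * L p r * E r u)
      = (ME.transpose * ML * ME) i u := by
    intro u
    rw [Matrix.mul_apply]
    simp only [Matrix.mul_apply, Matrix.transpose_apply, hME, hML, Matrix.of_apply,
      Finset.sum_mul]
    rw [Finset.sum_comm]
  have hT2 : ∀ u : K, (∑ p : K, ∑ w ∈ ex, E u p * B p w * F w j)
      = (ME * MB * MF) u j := by
    intro u
    rw [Finset.sum_comm]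
    rw [Matrix.mul_apply]
    have : ∀ w : K, (ME * MB) u w * MF w j
        = if w ∈ ex then (∑ p : K, E u p * B p w * F w j) else 0 := by
      intro w
      by_cases hw : w ∈ ex
      · simp only [hMF, Matrix.of_apply, if_pos hw, Matrix.mul_apply, hME, hMB,
          Finset.sum_mul]
      · simp [hMF, hw]
    rw [Finset.sum_congr rfl (fun w _ => this w), Finset.sum_ite_mem,
      Finset.univ_inter]
  have hLB : ML * MB = Matrix.of (fun p w => if w ∈ ex then (if p = w then d else 0) else 0) := by
    ext p w
    rw [Matrix.mul_apply]
    by_cases hw : w ∈ ex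
    · simp only [hML, hMB, Matrix.of_apply, if_pos hw]
      exact hcompat p w hw
    · simp [hML, hMB, hw]
  have hmain : (∑ u : K, (∑ p : K, ∑ r : K, E p i * L p r * E r u)
          * (∑ p : K, ∑ w ∈ ex, E u p * B p w * F w j))
      = ((ME.transpose * (ML * MB)) * MF) i j := by
    rw [Finset.sum_congr rfl (fun u _ => by rw [hT1 u, hT2 u])]
    rw [← Matrix.mul_apply]
    have hassoc : ME.transpose * ML * ME * (ME * MB * MF)
        = ME.transpose * (ML * MB) * MF := by
      calc ME.transpose * ML * ME * (ME * MB * MF)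
          = ME.transpose * (ML * ((ME * ME) * (MB * MF))) := by
            simp only [Matrix.mul_assoc]
        _ = ME.transpose * (ML * MB) * MF := by
            rw [hE2, Matrix.one_mul, Matrix.mul_assoc, Matrix.mul_assoc]
    rw [hassoc]
  rw [hmain]
  -- now compute the entry
  rw [Matrix.mul_apply]
  have hterm : ∀ w : K, (ME.transpose * (ML * MB)) i w * MF w j
      = if w ∈ ex then E w i * d * F w j else 0 := by
    intro w
    by_cases hw : w ∈ ex
    · simp only [hMF, Matrix.of_apply, if_pos hw, Matrix.mul_apply,
        Matrix.transpose_apply, hME, hLB, Matrix.of_apply]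
      congr 1
      have hstep : (∑ p : K, E p i * if p = w then d else 0)
          = ∑ p : K, if p = w then E p i * d else 0 :=
        Finset.sum_congr rfl (fun p _ => by rw [mul_ite, mul_zero])
      rw [hstep, Finset.sum_ite_eq' Finset.univ w (fun p => E p i * d)]
      simp
    · simp [hMF, hw]
  rw [Finset.sum_congr rfl (fun w _ => hterm w), Finset.sum_ite_mem, Finset.univ_inter]
  have : ∀ w ∈ ex, E w i * d * F w j = (E w i * F w j) * d := fun w _ => by ring
  rw [Finset.sum_congr rfl this, ← Finset.sum_mul, hEF i]
  by_cases hij : i = j <;> simp [hij]
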